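/- Let n ≥ 2 and y₁, …, yₙ : ℂ → ℂ. Assume (i) the (n−1)×(n−1) Casorati determinant of y₁, …, y_{n−1} is nonzero at every point: for all x ∈ ℂ, det (yᵢ(x+j))_{j=0,…,n−2; i=1,…,n−1} ≠ 0; and (ii) the n×n Casorati determinant of y₁, …, yₙ vanishes identically: for all x ∈ ℂ, det (yᵢ(x+j))_{j=0,…,n−1; i=1,…,n} = 0. Then there exist 1-periodic functions c₁, …, c_{n−1} : ℂ → ℂ such that yₙ(x) = c₁(x)·y₁(x) + ⋯ + c_{n−1}(x)·y_{n−1}(x) for all x ∈ ℂ. -/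

import Mathlib

/-- Converse direction of Casorati's theorem on the determinant Θ: if the
(n−1)×(n−1) Casoratian of y₁,…,y_{n−1} is nowhere zero while the full n×n
Casoratian of y₁,…,yₙ vanishes identically, then yₙ is a combination of
y₁,…,y_{n−1} with 1-periodic coefficients. -/
theorem casorati_converse (n : ℕ) (hn : 2 ≤ n) (y : Fin n → ℂ → ℂ)
    (hsub : ∀ x : ℂ, Matrix.det (Matrix.of fun j i : Fin (n - 1) =>
      y (Fin.castLE (Nat.sub_le n 1) i) (x + (j.val : ℂ))) ≠ 0)
    (hfull : ∀ x : ℂ,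
      Matrix.det (Matrix.of fun j i : Fin n => y i (x + (j.val : ℂ))) = 0) :
    ∃ c : Fin (n - 1) → ℂ → ℂ, (∀ i (x : ℂ), c i (x + 1) = c i x) ∧
      ∀ x : ℂ, y ⟨n - 1, by omega⟩ x =
        ∑ i, c i x * y (Fin.castLE (Nat.sub_le n 1) i) x := by
  classical
  obtain ⟨m, rfl⟩ : ∃ m, n = m + 1 := ⟨n - 1, by omega⟩
  set A : ℂ → Matrix (Fin m) (Fin m) ℂ :=
    fun x => Matrix.of fun j i => y i.castSucc (x + (j.val : ℂ)) with hAdef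
  have hsub' : ∀ x : ℂ, (A x).det ≠ 0 := hsub
  have hAunit : ∀ x, IsUnit (A x).det := fun x => isUnit_iff_ne_zero.2 (hsub' x)
  -- existence of a combination valid on a window of length m+1
  have hexist : ∀ x : ℂ, ∃ e : Fin m → ℂ,
      ∀ j : Fin (m + 1), y (Fin.last m) (x + (j.val : ℂ)) =
        ∑ i, e i * y i.castSucc (x + (j.val : ℂ)) := by
    intro x
    obtain ⟨d, hd0, hd⟩ := (Matrix.exists_mulVec_eq_zero_iff).2 (hfull x)
    have hrow : ∀ j : Fin (m + 1),
        ∑ i : Fin (m + 1), y i (x + (j.val : ℂ)) * d i = 0 := by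
      intro j
      have := congrFun hd j
      simpa [Matrix.mulVec, dotProduct] using this
    have hlast : d (Fin.last m) ≠ 0 := by
      intro h0
      apply hsub' x
      rw [← Matrix.exists_mulVec_eq_zero_iff]
      refine ⟨fun i => d i.castSucc, ?_, ?_⟩
      · intro hz
        apply hd0
        funext i
        induction i using Fin.lastCases with
        | last => exact h0
        | cast k => exact congrFun hz k
      · funext j
        have h := hrow j.castSucc
        rw [Fin.sum_univ_castSucc, h0, mul_zero, add_zero] at h
        simpa [Matrix.mulVec, dotProduct, hAdef] using h
    refine ⟨fun i => - d i.castSucc / d (Fin.last m), fun j => ?_⟩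
    have h := hrow j
    rw [Fin.sum_univ_castSucc] at h
    refine (mul_right_cancel₀ hlast ?_).symm
    calc (∑ i : Fin m, - d i.castSucc / d (Fin.last m)
            * y i.castSucc (x + (j.val : ℂ))) * d (Fin.last m)
        = ∑ i : Fin m, -(y i.castSucc (x + (j.val : ℂ)) * d i.castSucc) := by
          rw [Finset.sum_mul]
          refine Finset.sum_congr rfl fun i _ => ?_
          field_simp
      _ = -∑ i : Fin m, y i.castSucc (x + (j.val : ℂ)) * d i.castSucc := by simp
      _ = y (Fin.last m) (x + (j.val : ℂ)) * d (Fin.last m) := by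
          linear_combination -h
  -- definition of the coefficients
  set c : Fin m → ℂ → ℂ :=
    fun i x => ((A x)⁻¹.mulVec (fun j : Fin m => y (Fin.last m) (x + (j.val : ℂ)))) i
    with hcdef
  have huniq : ∀ (x : ℂ) (e : Fin m → ℂ),
      (∀ j : Fin m, y (Fin.last m) (x + (j.val : ℂ)) =
        ∑ i, e i * y i.castSucc (x + (j.val : ℂ))) →
      ∀ i, c i x = e i := by
    intro x e he i
    have hAe : (A x).mulVec e = fun j : Fin m => y (Fin.last m) (x + (j.val : ℂ)) := by
      funext j
      simp only [Matrix.mulVec, dotProduct, hAdef, Matrix.of_apply]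
      rw [he j]
      exact Finset.sum_congr rfl fun i _ => mul_comm _ _
    have h1 : c i x = ((A x)⁻¹.mulVec ((A x).mulVec e)) i := by rw [hAe]
    rw [h1, Matrix.mulVec_mulVec, Matrix.nonsing_inv_mul _ (hAunit x),
      Matrix.one_mulVec]
  refine ⟨c, ?_, ?_⟩
  · intro i x
    obtain ⟨e, he⟩ := hexist x
    have h1 : ∀ j : Fin m, y (Fin.last m) (x + (j.val : ℂ)) =
        ∑ i, e i * y i.castSucc (x + (j.val : ℂ)) := by
      intro j
      simpa using he j.castSucc
    have h2 : ∀ j : Fin m, y (Fin.last m) ((x + 1) + (j.val : ℂ)) =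
        ∑ i, e i * y i.castSucc ((x + 1) + (j.val : ℂ)) := by
      intro j
      have hj := he j.succ
      have hc : x + ((j.succ.val : ℕ) : ℂ) = (x + 1) + (j.val : ℂ) := by
        push_cast [Fin.val_succ]
        ring
      rw [hc] at hj
      exact hj
    rw [huniq (x + 1) e h2 i, huniq x e h1 i]
  · intro x
    obtain ⟨e, he⟩ := hexist x
    have h1 : ∀ j : Fin m, y (Fin.last m) (x + (j.val : ℂ)) =
        ∑ i, e i * y i.castSucc (x + (j.val : ℂ)) := by
      intro j
      simpa using he j.castSucc
    have h0 := he 0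
    simp only [Fin.val_zero, Nat.cast_zero, add_zero] at h0
    calc y (Fin.last m) x = ∑ i, e i * y i.castSucc x := h0
      _ = ∑ i, c i x * y i.castSucc x :=
        Finset.sum_congr rfl fun i _ => by rw [huniq x e h1 i]
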